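/- Let 𝒳, 𝒴 be finite alphabets, let F : Δ_𝒳 → ℝ be continuous on the probability simplex Δ_𝒳, let η : ℝ → ℝ be strictly increasing and continuous, and let ψ : ℝ → ℝ be a strictly decreasing continuous bijection such that ψ∘F is convex on Δ_𝒳. Then the function η̃ : t ↦ η(ψ⁻¹(−t)) is strictly increasing, the function F̃ := −(ψ∘F) is continuous and concave on Δ_𝒳, and for every joint distribution p_{X,Y} on 𝒳 × 𝒴 with strictly positive marginal p_Y, the EPKNAVG conditional entropy η(M_ψ[F(p_{X|Y}(·|Y))]) equals the EAVG conditional entropy η̃(Σ_y p_Y(y)·F̃(p_{X|Y}(·|y))). -/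

import Mathlib

/-- Let `F` be continuous on the probability simplex `Δ_𝒳`, `η` strictly
increasing and continuous, and `ψ` a strictly decreasing continuous bijection with `ψ∘F`
convex on `Δ_𝒳`. Then `η̃ : t ↦ η(ψ⁻¹(−t))` is strictly increasing, `F̃ := −(ψ∘F)` is
continuous and concave on `Δ_𝒳`, and for every joint distribution with strictly positive
marginal `p_Y`, the EPKNAVG conditional entropy `η(M_ψ[F(p_{X|Y}(·|Y))])` equals the
EAVG conditional entropy `η̃(Σ_y p_Y(y)·F̃(p_{X|Y}(·|y)))`. -/
theorem epknavg_eq_eavg_of_strictAnti {𝒳 𝒴 : Type*} [Fintype 𝒳] [Fintype 𝒴]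
    (F : (𝒳 → ℝ) → ℝ) (hF : ContinuousOn F (stdSimplex ℝ 𝒳))
    (η : ℝ → ℝ) (hη : StrictMono η) (hηc : Continuous η)
    (ψ : ℝ → ℝ) (hψ : StrictAnti ψ) (hψc : Continuous ψ) (hψb : Function.Bijective ψ)
    (hψF : ConvexOn ℝ (stdSimplex ℝ 𝒳) (ψ ∘ F)) :
    StrictMono (fun t => η (Function.invFun ψ (-t))) ∧
    ContinuousOn (fun q => -(ψ ∘ F) q) (stdSimplex ℝ 𝒳) ∧
    ConcaveOn ℝ (stdSimplex ℝ 𝒳) (fun q => -(ψ ∘ F) q) ∧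
    ∀ p : 𝒳 → 𝒴 → ℝ, (∀ x y, 0 ≤ p x y) → (∑ x, ∑ y, p x y) = 1 →
      (∀ y, 0 < ∑ x, p x y) →
      η (Function.invFun ψ
          (∑ y, (∑ x, p x y) * ψ (F (fun x => p x y / ∑ x', p x' y)))) =
        (fun t => η (Function.invFun ψ (-t)))
          (∑ y, (∑ x, p x y) * (fun q => -(ψ ∘ F) q) (fun x => p x y / ∑ x', p x' y)) := by
  have hinv : StrictAnti (Function.invFun ψ) := by
    intro a b hab
    obtain ⟨x, rfl⟩ := hψb.2 a
    obtain ⟨y, rfl⟩ := hψb.2 b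
    rw [Function.leftInverse_invFun hψb.1, Function.leftInverse_invFun hψb.1]
    exact hψ.lt_iff_gt.mp hab
  refine ⟨?_, ?_, ?_, ?_⟩
  · intro a b hab
    exact hη (hinv (neg_lt_neg hab))
  · exact (hψc.comp_continuousOn hF).neg
  · exact hψF.neg
  · intro p _ _ _
    simp only [Function.comp_apply, mul_neg, Finset.sum_neg_distrib, neg_neg]
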